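/- Let p : E → B be a fibration of essentially finite groupoids, A an object of E, B = p(A). Then |Aut_E(A)| = |Aut_{Fib(p,B)}(A)| · |Aut_B(B)| / |Aut_B(B) ▷ [A]|, where Aut_B(B) ▷ [A] denotes the orbit of the class of A in π₀(Fib(p,B)) under the lifting action of Aut_B(B). -/

import Mathlib

open CategoryTheory

universe u u'

variable {E : Type u} [Groupoid E] {B : Type u'} [Groupoid B]

/-- A fibration of groupoids: every morphism of the base with target `p.obj e`
lifts to a morphism of the total groupoid with target `e`. -/
def IsGrpdFibration (p : E ⥤ B) : Prop :=
  ∀ (e : E) (b' : B) (h : b' ⟶ p.obj e),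
    ∃ (e' : E) (g : e' ⟶ e) (he : p.obj e' = b'), p.map g = eqToHom he ≫ h

/-- The fibre of a functor of groupoids at an object of the base. -/
structure Fib (p : E ⥤ B) (b : B) where
  pt : E
  over_eq : p.obj pt = b

/-- The fibre is a groupoid: morphisms are the morphisms of `E` mapping to the identity. -/
instance fibGroupoid (p : E ⥤ B) (b : B) : Groupoid (Fib p b) where
  Hom a a' := {f : a.pt ⟶ a'.pt // p.map f = eqToHom (a.over_eq.trans a'.over_eq.symm)}
  id a := ⟨𝟙 a.pt, by simp⟩
  comp f g := ⟨f.1 ≫ g.1, by rw [Functor.map_comp, f.2, g.2, eqToHom_trans]⟩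
  id_comp f := Subtype.ext (Category.id_comp f.1)
  comp_id f := Subtype.ext (Category.comp_id f.1)
  assoc f g h := Subtype.ext (Category.assoc f.1 g.1 h.1)
  inv f := ⟨Groupoid.inv f.1, by
    rw [Groupoid.inv_eq_inv, Functor.map_inv]
    exact IsIso.inv_eq_of_hom_inv_id (by rw [f.2, eqToHom_trans, eqToHom_refl])⟩
  inv_comp f := Subtype.ext (Groupoid.inv_comp f.1)
  comp_inv f := Subtype.ext (Groupoid.comp_inv f.1)

/-- A groupoid is essentially finite if it is equivalent to a finite groupoid; equivalently,
it has finitely many isomorphism classes of objects and all Hom-sets are finite. -/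
def EssentiallyFinite (C : Type*) [Category C] : Prop :=
  Finite (Quotient (isIsomorphicSetoid C)) ∧ ∀ X Y : C, Finite (X ⟶ Y)

/-- For a fibration of essentially finite groupoids `p : E → B` and an object `A` over
`B = p(A)`, one has `|Aut_E(A)| = |Aut_{Fib(p,B)}(A)| * |Aut_B(B)| / |Aut_B(B) ▷ [A]|`,
where the denominator is the cardinality of the orbit of the class of `A` in
`π₀(Fib(p,B))` under the lifting action of `Aut_B(B)`. -/
theorem card_aut_fibration (p : E ⥤ B) (hp : IsGrpdFibration p)
    (hE : EssentiallyFinite E) (hB : EssentiallyFinite B) (A : E)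
    (act : MulAction (Aut (p.obj A)) (Quotient (isIsomorphicSetoid (Fib p (p.obj A)))))
    (hact : ∀ (g : Aut (p.obj A)) (X Xg : Fib p (p.obj A)) (glift : Xg.pt ⟶ X.pt),
        p.map glift = eqToHom Xg.over_eq ≫ g.hom ≫ eqToHom X.over_eq.symm →
        act.smul g (Quotient.mk (isIsomorphicSetoid (Fib p (p.obj A))) X)
          = Quotient.mk (isIsomorphicSetoid (Fib p (p.obj A))) Xg) :
    Nat.card (Aut A)
      = Nat.card (Aut (Fib.mk A rfl : Fib p (p.obj A))) * Nat.card (Aut (p.obj A))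
        / Nat.card ↥{x : Quotient (isIsomorphicSetoid (Fib p (p.obj A))) |
            ∃ g : Aut (p.obj A),
              act.smul g (Quotient.mk (isIsomorphicSetoid (Fib p (p.obj A))) (Fib.mk A rfl)) = x} := by
  classical
  letI := act
  have finE := hE.2
  have finB := hB.2
  haveI : Finite (Aut A) := Finite.of_injective (fun f : Aut A => f.hom) fun f g h => Aut.ext h
  haveI : Finite (Aut (p.obj A)) :=
    Finite.of_injective (fun f : Aut (p.obj A) => f.hom) fun f g h => Aut.ext h
  set A₀ : Fib p (p.obj A) := Fib.mk A rfl with hA₀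
  set q : Fib p (p.obj A) → Quotient (isIsomorphicSetoid (Fib p (p.obj A))) :=
    Quotient.mk (isIsomorphicSetoid (Fib p (p.obj A))) with hq
  let φ : Aut A →* Aut (p.obj A) := Functor.mapAut A p
  -- the kernel of φ is the automorphism group in the fibre
  have eKer : Aut A₀ ≃ φ.ker := by
    refine ⟨fun u => ⟨⟨u.hom.1, u.inv.1, congrArg Subtype.val u.hom_inv_id,
        congrArg Subtype.val u.inv_hom_id⟩, ?_⟩, fun f => ?_, ?_, ?_⟩
    · apply Aut.ext
      exact u.hom.2.trans (eqToHom_refl _ _)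
    · have h1 : p.map (f : Aut A).hom = 𝟙 (p.obj A) := by
        have := congrArg Iso.hom f.2
        exact this.trans rfl
      have h2 : p.map (f : Aut A).inv = 𝟙 (p.obj A) := by
        have := congrArg Iso.inv f.2
        exact this.trans rfl
      exact ⟨⟨(f : Aut A).hom, h1.trans (eqToHom_refl _ _).symm⟩,
        ⟨(f : Aut A).inv, h2.trans (eqToHom_refl _ _).symm⟩,
        Subtype.ext (f : Aut A).hom_inv_id, Subtype.ext (f : Aut A).inv_hom_id⟩
    · intro u
      apply Iso.ext
      apply Subtype.ext
      rfl
    · intro f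
      apply Subtype.ext
      apply Aut.ext
      rfl
  -- the range of φ is the stabilizer of [A₀]
  have hRange : φ.range = MulAction.stabilizer (Aut (p.obj A)) (q A₀) := by
    ext g
    constructor
    · rintro ⟨f, rfl⟩
      show act.smul _ _ = _
      refine hact _ A₀ A₀ f.hom ?_
      show p.map f.hom = eqToHom A₀.over_eq ≫ p.map f.hom ≫ eqToHom A₀.over_eq.symm
      rw [show eqToHom A₀.over_eq = 𝟙 _ from eqToHom_refl _ _]
      simp
      exact (Category.comp_id _).symm
    · intro hg
      obtain ⟨e', glift, he, hlift⟩ := hp A (p.obj A) g.hom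
      set Xg : Fib p (p.obj A) := ⟨e', he⟩ with hXg
      have horb : act.smul g (q A₀) = q Xg := by
        refine hact g A₀ Xg glift ?_
        show p.map glift = eqToHom he ≫ g.hom ≫ eqToHom A₀.over_eq.symm
        rw [show eqToHom A₀.over_eq.symm = 𝟙 _ from eqToHom_refl _ _, Category.comp_id]
        exact hlift
      have hstab : act.smul g (q A₀) = q A₀ := hg
      have : q Xg = q A₀ := horb.symm.trans hstab
      obtain ⟨u⟩ : Nonempty (Xg ≅ A₀) := Quotient.exact this
      have hu : p.map u.hom.1 = eqToHom (Xg.over_eq.trans A₀.over_eq.symm) := u.hom.2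
      let f : A ⟶ A := Groupoid.inv u.hom.1 ≫ glift
      refine ⟨(Groupoid.isoEquivHom A A).symm f, ?_⟩
      apply Aut.ext
      show p.map f = g.hom
      have : p.map (Groupoid.inv u.hom.1) = eqToHom (Xg.over_eq.trans A₀.over_eq.symm).symm := by
        rw [Groupoid.inv_eq_inv, Functor.map_inv]
        exact IsIso.inv_eq_of_hom_inv_id (by rw [hu, eqToHom_trans, eqToHom_refl])
      rw [show p.map f = p.map (Groupoid.inv u.hom.1) ≫ p.map glift from p.map_comp _ _,
        this, hlift, ← Category.assoc, eqToHom_trans, eqToHom_refl, Category.id_comp]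
  -- the set in the statement is the orbit of [A₀]
  have hset : {x : Quotient (isIsomorphicSetoid (Fib p (p.obj A))) |
      ∃ g : Aut (p.obj A), act.smul g (q A₀) = x} = MulAction.orbit (Aut (p.obj A)) (q A₀) :=
    Set.ext fun x => Iff.rfl
  haveI : Finite (MulAction.orbit (Aut (p.obj A)) (q A₀)) :=
    Set.finite_range _ |>.to_subtype
  haveI : Nonempty (MulAction.orbit (Aut (p.obj A)) (q A₀)) :=
    ⟨⟨q A₀, MulAction.mem_orbit_self _⟩⟩
  have horbpos : 0 < Nat.card (MulAction.orbit (Aut (p.obj A)) (q A₀)) :=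
    Nat.card_pos (α := MulAction.orbit (Aut (p.obj A)) (q A₀))
  -- cardinality computations
  have h1 : Nat.card (Aut A) = Nat.card (Aut A ⧸ φ.ker) * Nat.card φ.ker :=
    Subgroup.card_eq_card_quotient_mul_card_subgroup _
  have h2 : Nat.card (Aut A ⧸ φ.ker) = Nat.card φ.range :=
    Nat.card_congr (QuotientGroup.quotientKerEquivRange φ).toEquiv
  have h3 : Nat.card φ.range
      = Nat.card (MulAction.stabilizer (Aut (p.obj A)) (q A₀)) := by rw [hRange]
  have h4 : Nat.card (Aut (p.obj A))
      = Nat.card (MulAction.orbit (Aut (p.obj A)) (q A₀))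
        * Nat.card (MulAction.stabilizer (Aut (p.obj A)) (q A₀)) := by
    rw [Subgroup.card_eq_card_quotient_mul_card_subgroup
      (MulAction.stabilizer (Aut (p.obj A)) (q A₀))]
    congr 1
    exact Nat.card_congr (MulAction.orbitEquivQuotientStabilizer (Aut (p.obj A)) (q A₀)).symm
  have h5 : Nat.card (Aut A₀) = Nat.card φ.ker := Nat.card_congr eKer
  rw [hset, h1, h2, h3, h4, h5]
  set o := Nat.card (MulAction.orbit (Aut (p.obj A)) (q A₀))
  set s := Nat.card (MulAction.stabilizer (Aut (p.obj A)) (q A₀))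
  set k := Nat.card φ.ker
  rw [show k * (o * s) = o * (s * k) by ring, Nat.mul_div_cancel_left _ horbpos]
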